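/- Let a = (a_1,…,a_l) be a strictly increasing sequence of positive integers. Then rem(a) = ∅ if and only if a is a symplectic column, i.e., a_i ≥ 2i−1 for all i ∈ [l]. -/

import Mathlib

/-- The removal subword `rem a` of a column `a = (a_1, …, a_l)` (written 0-indexed as a
list): `rem a = []` if `l ≤ 1`; if `l ≥ 2`, `a_l` is even, `a_{l-1} = a_l − 1` and
`a_l < 2l − |rem (a_1,…,a_{l-2})| − 1`, then `rem a = rem (a_1,…,a_{l-2}) ++ [a_{l-1}, a_l]`;
otherwise `rem a = rem (a_1,…,a_{l-1})`. -/
def rem (a : List ℕ) : List ℕ :=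
  if a.length ≤ 1 then []
  else
    if a.getLast! % 2 = 0 ∧ a.dropLast.getLast! + 1 = a.getLast! ∧
        a.getLast! + (rem a.dropLast.dropLast).length + 1 < 2 * a.length then
      rem a.dropLast.dropLast ++ [a.dropLast.getLast!, a.getLast!]
    else
      rem a.dropLast
termination_by a.length
decreasing_by
  all_goals (simp [List.length_dropLast]; omega)

lemma getLast!_eq_getElem' {l : List ℕ} (h : l ≠ []) (hh : l.length - 1 < l.length) :
    l.getLast! = l[l.length - 1] := by
  rw [List.getLast!_of_getLast? (List.getLast?_eq_getLast h), List.getLast_eq_getElem]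

lemma rem_aux (a : List ℕ) (hsorted : a.Pairwise (· < ·)) (hpos : ∀ x ∈ a, 1 ≤ x) :
    rem a = [] ↔ ∀ i (h : i < a.length), 2 * i + 1 ≤ a[i] := by
  have hs' : a.dropLast.Pairwise (· < ·) := hsorted.sublist a.dropLast_sublist
  have hp' : ∀ x ∈ a.dropLast, 1 ≤ x := fun x hx => hpos x (List.dropLast_sublist a |>.mem hx)
  have hs'' : a.dropLast.dropLast.Pairwise (· < ·) :=
    hs'.sublist a.dropLast.dropLast_sublist
  have hp'' : ∀ x ∈ a.dropLast.dropLast, 1 ≤ x := fun x hx =>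
    hp' x (List.dropLast_sublist _ |>.mem hx)
  by_cases h1 : a.length ≤ 1
  · rw [rem]
    simp only [h1, if_true, true_iff]
    intro i hi
    have hi0 : i = 0 := by omega
    subst hi0
    have := hpos a[0] (List.getElem_mem _)
    omega
  · push_neg at h1
    have hl : 2 ≤ a.length := h1
    have hne : a ≠ [] := by intro h; simp [h] at hl
    have hdne : a.dropLast ≠ [] := by
      intro h
      have := congrArg List.length h
      simp at this; omega
    have hlast : a.getLast! = a[a.length - 1] := getLast!_eq_getElem' hne (by omega)
    have hdl : a.dropLast.length = a.length - 1 := a.length_dropLast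
    have hlast2 : a.dropLast.getLast! = a[a.length - 2] := by
      rw [getLast!_eq_getElem' hdne (by rw [hdl]; omega)]
      rw [List.getElem_dropLast]
      congr 1
      omega
    -- recursive facts
    have ih' := rem_aux a.dropLast hs' hp'
    have ih'' := rem_aux a.dropLast.dropLast hs'' hp''
    have hsort : ∀ i j (hi : i < a.length) (hj : j < a.length), i < j → a[i] < a[j] :=
      fun i j hi hj hij => List.pairwise_iff_getElem.mp hsorted i j hi hj hij
    rw [rem]
    rw [if_neg (by omega : ¬ a.length ≤ 1)]
    by_cases hc : a.getLast! % 2 = 0 ∧ a.dropLast.getLast! + 1 = a.getLast! ∧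
        a.getLast! + (rem a.dropLast.dropLast).length + 1 < 2 * a.length
    · simp only [hc, if_true]
      constructor
      · intro h; simp at h
      · intro h
        have := h (a.length - 1) (by omega)
        omega
    · simp only [hc, if_false]
      rw [ih']
      constructor
      · intro h i hi
        by_cases hi' : i < a.length - 1
        · have := h i (by rw [hdl]; omega)
          rwa [List.getElem_dropLast] at this
        · have hi2 : i = a.length - 1 := by omega
          subst hi2
          by_contra hcon
          push_neg at hcon
          -- a[l-1] ≤ 2l-2
          have h2 : a[a.length - 2] ≥ 2 * (a.length - 2) + 1 := by
            have := h (a.length - 2) (by rw [hdl]; omega)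
            rwa [List.getElem_dropLast] at this
          have h3 : a[a.length - 2] < a[a.length - 1] :=
            hsort _ _ (by omega) (by omega) (by omega)
          have hv2 : a[a.length - 2] = 2 * a.length - 3 := by omega
          have hv1 : a[a.length - 1] = 2 * a.length - 2 := by omega
          have hrem'' : rem a.dropLast.dropLast = [] := by
            rw [ih'']
            intro i hi
            simp only [List.length_dropLast] at hi
            rw [List.getElem_dropLast, List.getElem_dropLast]
            have := h i (by rw [hdl]; omega)
            rwa [List.getElem_dropLast] at this
          exact hc ⟨by rw [hlast, hv1]; omega,
            by rw [hlast, hlast2, hv1, hv2]; omega,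
            by rw [hlast, hv1, hrem'']; simp; omega⟩
      · intro h i hi
        rw [List.getElem_dropLast]
        exact h i (by rw [hdl] at hi; omega)
termination_by a.length
decreasing_by
  all_goals (simp [List.length_dropLast]; omega)

/-- `rem a = ∅` iff `a` is a symplectic column, i.e. `a_i ≥ 2i−1` (1-indexed), which
0-indexed reads `a[i] ≥ 2i+1`. -/
theorem stmt_12 (a : List ℕ) (hsorted : a.Pairwise (· < ·)) (hpos : ∀ x ∈ a, 1 ≤ x) :
    rem a = [] ↔ ∀ i (h : i < a.length), 2 * i + 1 ≤ a.get ⟨i, h⟩ := by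
  simpa [List.get_eq_getElem] using rem_aux a hsorted hpos
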